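/- Let β̂τ, β̂ᵥ, N⁰ᵥ, μ̂ᵥ, r̂, σ, μτ, Nτ be positive reals, and let K be the real 3×3 matrix with K₁₃ = β̂τ/μ̂ᵥ, K₃₁ = β̂ᵥ·N⁰ᵥ·(σ + r̂)/(Nτ·r̂·(σ + μτ)), K₃₂ = β̂ᵥ·N⁰ᵥ/(r̂·Nτ), and all other entries 0. Then the set of complex eigenvalues of K is {0, R₀, −R₀}, where R₀ = √((β̂τ/(σ + μτ))·(β̂ᵥ/μ̂ᵥ)·(N⁰ᵥ/Nτ)·(σ/r̂ + 1)); in particular the maximum of the moduli of the eigenvalues of K (its spectral radius) equals R₀. -/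

import Mathlib

/-- The complex eigenvalues of the next-generation matrix `K` of a single
isolated orchard are exactly `{0, R₀, −R₀}` with `R₀` as in paper Eq. (16),
and its spectral radius is `R₀`. -/
theorem eigenvalues_NGM_single_orchard
    (βτ βv N0v μv rhat σ μτ Nτ : ℝ)
    (hβτ : 0 < βτ) (hβv : 0 < βv) (hN0v : 0 < N0v) (hμv : 0 < μv)
    (hr : 0 < rhat) (hσ : 0 < σ) (hμτ : 0 < μτ) (hNτ : 0 < Nτ)
    (K : Matrix (Fin 3) (Fin 3) ℝ)
    (hK : K = Matrix.of
      ![![0, 0, βτ / μv],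
        ![0, 0, 0],
        ![βv * N0v * (σ + rhat) / (Nτ * rhat * (σ + μτ)),
          βv * N0v / (rhat * Nτ), 0]])
    (R₀ : ℝ)
    (hR₀ : R₀ = Real.sqrt
      (βτ / (σ + μτ) * (βv / μv) * (N0v / Nτ) * (σ / rhat + 1))) :
    spectrum ℂ (K.map (Complex.ofReal ·)) = {0, (R₀ : ℂ), (-R₀ : ℂ)} ∧
    IsGreatest ((‖·‖ : ℂ → ℝ) '' spectrum ℂ (K.map (Complex.ofReal ·))) R₀ := by
  have hR0nn : 0 ≤ R₀ := hR₀ ▸ Real.sqrt_nonneg _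
  have hsq : R₀ ^ 2 = βτ / μv * (βv * N0v * (σ + rhat) / (Nτ * rhat * (σ + μτ))) := by
    rw [hR₀, Real.sq_sqrt (by positivity)]
    field_simp
  have hsqC : (R₀ : ℂ) ^ 2
      = (βτ : ℂ) / μv * (βv * N0v * (σ + rhat) / (Nτ * rhat * (σ + μτ))) := by
    exact_mod_cast congrArg (Complex.ofReal ·) hsq
  have hmem : ∀ z : ℂ, z ∈ spectrum ℂ (K.map (Complex.ofReal ·)) ↔
      z * (z - R₀) * (z + R₀) = 0 := by
    intro z
    rw [spectrum.mem_iff, Matrix.isUnit_iff_isUnit_det, isUnit_iff_ne_zero, not_not]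
    have hdet : (algebraMap ℂ (Matrix (Fin 3) (Fin 3) ℂ) z - K.map (Complex.ofReal ·)).det
        = z * (z - R₀) * (z + R₀) := by
      subst hK
      simp [Matrix.det_fin_three, Matrix.algebraMap_matrix_apply, Matrix.map_apply,
        Matrix.vecHead, Matrix.vecTail]
      linear_combination z * hsqC
    rw [hdet]
  have hspec : spectrum ℂ (K.map (Complex.ofReal ·)) = {0, (R₀ : ℂ), (-R₀ : ℂ)} := by
    ext z
    rw [hmem z]
    simp only [Set.mem_insert_iff, Set.mem_singleton_iff, mul_eq_zero, sub_eq_zero]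
    constructor
    · rintro ((h | h) | h)
      · exact Or.inl h
      · exact Or.inr (Or.inl h)
      · exact Or.inr (Or.inr (by linear_combination h))
    · rintro (h | h | h)
      · exact Or.inl (Or.inl h)
      · exact Or.inl (Or.inr h)
      · exact Or.inr (by rw [h]; ring)
  refine ⟨hspec, ?_, ?_⟩
  · exact ⟨(R₀ : ℂ), by rw [hspec]; simp, by
      simp [Complex.norm_real, abs_of_nonneg hR0nn]⟩
  · rintro x ⟨z, hz, rfl⟩
    rw [hspec] at hz
    rcases hz with h | h | h
    · simp only [h, norm_zero]; exact hR0nn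
    · rw [h]; simp [Complex.norm_real, abs_of_nonneg hR0nn]
    · rw [h]; simp [Complex.norm_real, abs_of_nonneg hR0nn]
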